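/- The simple graph G on vertex set {1,2,3,4,5,6,7} with edge set {{1,2},{1,3},{1,7},{2,4},{2,6},{2,7},{3,4},{3,6},{3,7},{4,5},{5,6}} (graph number 873 in the Atlas of Graphs) has minimum rank 3 over the real numbers. -/

import Mathlib

set_option maxHeartbeats 1000000

/-- Edge list of graph number 873 in the Atlas of Graphs (vertices 1..7). -/
def atlas873Edges : List (ℕ × ℕ) := [(1,2),(1,3),(1,7),(2,4),(2,6),(2,7),(3,4),(3,6),(3,7),(4,5),(5,6)]

section VecEval
variable {α : Type*} (a b c d e f g : α)

@[simp] lemma vec3_0 : ![a,b,c] (0 : Fin 3) = a := rfl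
@[simp] lemma vec3_1 : ![a,b,c] (1 : Fin 3) = b := rfl
@[simp] lemma vec3_2 : ![a,b,c] (2 : Fin 3) = c := rfl
@[simp] lemma vec7_0 : ![a,b,c,d,e,f,g] (0 : Fin 7) = a := rfl
@[simp] lemma vec7_1 : ![a,b,c,d,e,f,g] (1 : Fin 7) = b := rfl
@[simp] lemma vec7_2 : ![a,b,c,d,e,f,g] (2 : Fin 7) = c := rfl
@[simp] lemma vec7_3 : ![a,b,c,d,e,f,g] (3 : Fin 7) = d := rfl
@[simp] lemma vec7_4 : ![a,b,c,d,e,f,g] (4 : Fin 7) = e := rfl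
@[simp] lemma vec7_5 : ![a,b,c,d,e,f,g] (5 : Fin 7) = f := rfl
@[simp] lemma vec7_6 : ![a,b,c,d,e,f,g] (6 : Fin 7) = g := rfl

end VecEval

/-- Selecting rows via `f` and columns via `g` is a product `P * A * Q`. -/
lemma submatrix_eq_mul_mul (A : Matrix (Fin 7) (Fin 7) ℝ) (f g : Fin 3 → Fin 7) :
    A.submatrix f g =
      (Matrix.of fun i k => if k = f i then (1:ℝ) else 0) * A *
        (Matrix.of fun k j => if k = g j then (1:ℝ) else 0) := by
  ext i j
  simp [Matrix.mul_apply, Finset.sum_ite_eq, Finset.mul_sum, mul_ite]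

/-- A nonzero 3×3 minor forces rank at least 3. -/
lemma three_le_rank_of_minor (A : Matrix (Fin 7) (Fin 7) ℝ) (f g : Fin 3 → Fin 7)
    (h : (A.submatrix f g).det ≠ 0) : 3 ≤ A.rank := by
  have h3 : (A.submatrix f g).rank = 3 := by
    rw [Matrix.rank_of_isUnit _ (Matrix.isUnit_iff_isUnit_det _ |>.2 (isUnit_iff_ne_zero.2 h))]
    simp
  calc (3:ℕ) = (A.submatrix f g).rank := h3.symm
    _ = ((Matrix.of fun i k => if k = f i then (1:ℝ) else 0) * A *
        (Matrix.of fun k j => if k = g j then (1:ℝ) else 0)).rank := by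
        rw [submatrix_eq_mul_mul]
    _ ≤ ((Matrix.of fun i k => if k = f i then (1:ℝ) else 0) * A).rank :=
        Matrix.rank_mul_le_left _ _
    _ ≤ A.rank := Matrix.rank_mul_le_right _ _

/-- The witness matrix factor: 7 vectors in ℝ³. -/
def atlasB : Matrix (Fin 3) (Fin 7) ℝ :=
  !![0, 1, 1, 1, 1, 0, 0;
     0, -1, -1, 0, 1, 1, 0;
     1, 1, -2, 0, 0, 0, 1]

/-- The witness matrix: Gram matrix of the 7 vectors. -/
def atlasA : Matrix (Fin 7) (Fin 7) ℝ := atlasB.transpose * atlasB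

lemma atlasA_apply (i j : Fin 7) :
    atlasA i j = atlasB 0 i * atlasB 0 j + atlasB 1 i * atlasB 1 j + atlasB 2 i * atlasB 2 j := by
  simp [atlasA, Matrix.mul_apply, Fin.sum_univ_three, Matrix.transpose_apply]

/-- Graph number 873 in the Atlas of Graphs has minimum rank 3 over the reals:
3 is the least element of the set of ranks of real symmetric 7×7 matrices whose
off-diagonal zero/nonzero pattern matches the edges of the graph. -/
theorem atlas873_minRank_eq_three :
    IsLeast {r : ℕ | ∃ A : Matrix (Fin 7) (Fin 7) ℝ, A.IsSymm ∧
        (∀ i j : Fin 7, i ≠ j →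
          (A i j ≠ 0 ↔
            ((i.val + 1, j.val + 1) ∈ atlas873Edges ∨
             (j.val + 1, i.val + 1) ∈ atlas873Edges))) ∧
        A.rank = r} 3 := by
  constructor
  · -- membership: atlasA works
    refine ⟨atlasA, ?_, ?_, ?_⟩
    · unfold atlasA Matrix.IsSymm
      rw [Matrix.transpose_mul, Matrix.transpose_transpose]
    · intro i j hij
      fin_cases i <;> fin_cases j <;>
        first
        | exact absurd rfl hij
        | simp only [atlasA_apply, atlasB, Matrix.of_apply, Matrix.cons_val',
          vec3_0, vec3_1, vec3_2, vec7_0, vec7_1, vec7_2, vec7_3, vec7_4, vec7_5, vec7_6] <;>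
          norm_num [Matrix.vecHead, Matrix.vecTail, atlas873Edges, Matrix.cons_val, Matrix.cons_val_two]
    · have hle : atlasA.rank ≤ 3 := by
        calc atlasA.rank ≤ atlasB.rank := Matrix.rank_mul_le_right _ _
          _ ≤ 3 := by simpa using atlasB.rank_le_card_height
      have hge : 3 ≤ atlasA.rank := by
        apply three_le_rank_of_minor atlasA ![4, 3, 1] ![3, 1, 6]
        have : (atlasA.submatrix ![4, 3, 1] ![3, 1, 6]).det =
            !![(1:ℝ), 0, 0; 1, 1, 0; 1, 3, 1].det := by
          congr 1
          ext i j
          fin_cases i <;> fin_cases j <;>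
            simp only [Matrix.submatrix_apply, atlasA_apply, atlasB, Matrix.of_apply,
              Matrix.cons_val', vec3_0, vec3_1, vec3_2,
              vec7_0, vec7_1, vec7_2, vec7_3, vec7_4, vec7_5, vec7_6] <;>
            norm_num [Matrix.vecHead, Matrix.vecTail, Matrix.cons_val, Matrix.cons_val_two]
        rw [this, Matrix.det_fin_three]
        norm_num [Matrix.cons_val_two]
      omega
  · -- lower bound
    rintro r ⟨A, -, hpat, rfl⟩
    apply three_le_rank_of_minor A ![4, 3, 1] ![3, 1, 6]
    have h43 : A 4 3 ≠ 0 := (hpat 4 3 (by decide)).2 (by decide)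
    have h41 : A 4 1 = 0 := by
      by_contra h
      exact absurd ((hpat 4 1 (by decide)).1 h) (by decide)
    have h46 : A 4 6 = 0 := by
      by_contra h
      exact absurd ((hpat 4 6 (by decide)).1 h) (by decide)
    have h31 : A 3 1 ≠ 0 := (hpat 3 1 (by decide)).2 (by decide)
    have h36 : A 3 6 = 0 := by
      by_contra h
      exact absurd ((hpat 3 6 (by decide)).1 h) (by decide)
    have h16 : A 1 6 ≠ 0 := (hpat 1 6 (by decide)).2 (by decide)
    rw [Matrix.det_fin_three]
    simp only [Matrix.submatrix_apply, vec3_0, vec3_1, vec3_2]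
    rw [h41, h46, h36]
    ring_nf
    simpa using mul_ne_zero (mul_ne_zero h43 h31) h16
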